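/- Let (P₁, P₂) be a 2-partition of distinct reals y₁,...,yₙ, and suppose y_α, y_β ∈ P₁, y_γ ∈ P₂ with y_α > y_β > y_γ, and these are the only reversed pairs between P₁ and P₂. Then swapping the pair (y_α, y_γ) between the groups reduces the total within-group sum of squares SS(P₁) + SS(P₂) by at least as much as swapping the pair (y_β, y_γ). -/

import Mathlib

open Finset

noncomputable def mu (P : Finset ℝ) : ℝ := (∑ y ∈ P, y) / P.card

noncomputable def SS (P : Finset ℝ) : ℝ := ∑ y ∈ P, (y - mu P) ^ 2

lemma SS_eq (P : Finset ℝ) (h : P.card ≠ 0) :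
    SS P = (∑ y ∈ P, y ^ 2) - (∑ y ∈ P, y) ^ 2 / P.card := by
  have hn : (P.card : ℝ) ≠ 0 := Nat.cast_ne_zero.mpr h
  unfold SS mu
  have : ∀ y ∈ P, (y - (∑ y ∈ P, y) / P.card) ^ 2
      = y ^ 2 - 2 * ((∑ y ∈ P, y) / P.card) * y + ((∑ y ∈ P, y) / P.card) ^ 2 := by
    intro y _; ring
  rw [Finset.sum_congr rfl this]
  rw [Finset.sum_add_distrib, Finset.sum_sub_distrib, ← Finset.mul_sum, Finset.sum_const,
    nsmul_eq_mul]
  field_simp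
  ring

lemma SS_swap (P : Finset ℝ) (a b : ℝ) (ha : a ∈ P) (hb : b ∉ P) :
    SS (insert b (P.erase a))
      = SS P + (b - a) * (b + a - 2 * mu P) - (b - a) ^ 2 / P.card := by
  have hpos : 0 < P.card := Finset.card_pos.mpr ⟨a, ha⟩
  have h0 : P.card ≠ 0 := hpos.ne'
  have hn : (P.card : ℝ) ≠ 0 := Nat.cast_ne_zero.mpr h0
  have hbe : b ∉ P.erase a := fun h => hb (Finset.mem_of_mem_erase h)
  have hcard : (insert b (P.erase a)).card = P.card := by
    rw [Finset.card_insert_of_notMem hbe, Finset.card_erase_of_mem ha]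
    omega
  have hs : ∑ y ∈ insert b (P.erase a), y = (∑ y ∈ P, y) - a + b := by
    rw [Finset.sum_insert hbe, Finset.sum_erase_eq_sub ha]; ring
  have hsq : ∑ y ∈ insert b (P.erase a), y ^ 2 = (∑ y ∈ P, y ^ 2) - a ^ 2 + b ^ 2 := by
    rw [Finset.sum_insert hbe, Finset.sum_erase_eq_sub ha]; ring
  rw [SS_eq _ (by rw [hcard]; exact h0), SS_eq P h0, hs, hsq, hcard]
  unfold mu
  field_simp
  ring

lemma key_ineq (c n₁ n₂ da db : ℝ) (hc : 0 < c) (h1 : 0 < n₁) (h2 : 0 < n₂)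
    (hd : da < db) (he : db < 0) :
    2*da*c - da^2/n₁ - da^2/n₂ ≤ 2*db*c - db^2/n₁ - db^2/n₂ := by
  have hu : 0 < 1/n₁ := by positivity
  have hv : 0 < 1/n₂ := by positivity
  have e1 : da^2/n₁ = da^2 * (1/n₁) := by ring
  have e2 : da^2/n₂ = da^2 * (1/n₂) := by ring
  have e3 : db^2/n₁ = db^2 * (1/n₁) := by ring
  have e4 : db^2/n₂ = db^2 * (1/n₂) := by ring
  rw [e1, e2, e3, e4]
  nlinarith [mul_pos hc (sub_pos.2 hd), mul_pos (add_pos hu hv)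
    (mul_pos (sub_pos.2 hd) (neg_pos.2 (by linarith : da + db < 0)))]

theorem stmt_5 (P₁ P₂ : Finset ℝ) (hdisj : Disjoint P₁ P₂)
    (h₁ : 2 ≤ P₁.card) (h₂ : 2 ≤ P₂.card)
    (hmu : mu P₁ < mu P₂)
    (yα yβ yγ : ℝ) (hα : yα ∈ P₁) (hβ : yβ ∈ P₁) (hγ : yγ ∈ P₂)
    (hαβ : yβ < yα) (hβγ : yγ < yβ)
    (honly : ∀ a ∈ P₁, ∀ b ∈ P₂, b < a → (a = yα ∧ b = yγ) ∨ (a = yβ ∧ b = yγ)) :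
    (SS P₁ + SS P₂)
        - (SS (insert yγ (P₁.erase yβ)) + SS (insert yβ (P₂.erase yγ)))
      ≤ (SS P₁ + SS P₂)
        - (SS (insert yγ (P₁.erase yα)) + SS (insert yα (P₂.erase yγ))) := by
  have hγ1 : yγ ∉ P₁ := fun h => (Finset.disjoint_left.mp hdisj h) hγ
  have hα2 : yα ∉ P₂ := fun h => (Finset.disjoint_left.mp hdisj hα) h
  have hβ2 : yβ ∉ P₂ := fun h => (Finset.disjoint_left.mp hdisj hβ) h
  have hn1 : (0:ℝ) < (P₁.card : ℝ) := by positivity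
  have hn2 : (0:ℝ) < (P₂.card : ℝ) := by
    have : 0 < P₂.card := by omega
    exact_mod_cast this
  rw [SS_swap P₁ yα yγ hα hγ1, SS_swap P₂ yγ yα hγ hα2,
    SS_swap P₁ yβ yγ hβ hγ1, SS_swap P₂ yγ yβ hγ hβ2]
  have key := key_ineq (mu P₂ - mu P₁) (P₁.card : ℝ) (P₂.card : ℝ)
    (yγ - yα) (yγ - yβ) (by linarith) hn1 hn2 (by linarith) (by linarith)
  have eα : (yγ - yα) * (yγ + yα - 2 * mu P₁) + (yα - yγ) * (yα + yγ - 2 * mu P₂)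
      = 2 * (yγ - yα) * (mu P₂ - mu P₁) := by ring
  have eβ : (yγ - yβ) * (yγ + yβ - 2 * mu P₁) + (yβ - yγ) * (yβ + yγ - 2 * mu P₂)
      = 2 * (yγ - yβ) * (mu P₂ - mu P₁) := by ring
  have e1 : (yα - yγ)^2 = (yγ - yα)^2 := by ring
  have e2 : (yβ - yγ)^2 = (yγ - yβ)^2 := by ring
  rw [e1, e2]
  linarith [key, eα, eβ]
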